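/- Let S be a linear integrable cost process, S_t(x,ω) = s_t(ω)·x with s=(s_t)_{t=0}^T an ℝ^J-valued adapted integrable process, and let there be no portfolio constraints (D_t(ω) = ℝ^J). Let C be the set of claim processes superhedgeable with zero cost. Then the polar cone of C¹ satisfies {y ∈ M^∞ | E ∑_{t=0}^T c_t y_t ≤ 0 ∀ c ∈ C¹} = {y ∈ M^∞ : y_t ≥ 0 a.s. for all t and the process (y_t s_t)_{t=0}^T is a martingale with respect to (F_t)}. -/

import Mathlib

open MeasureTheory Filter
open scoped ENNReal Topology

noncomputable section

/-- The recession cone of a set in a real vector space. -/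
def rcone {V : Type*} [AddCommMonoid V] [SMul ℝ V] (A : Set V) : Set V :=
  {y | ∀ a ∈ A, ∀ α : ℝ, 0 < α → a + α • y ∈ A}

variable {Ω : Type*} {m0 : MeasurableSpace Ω} {T : ℕ}

/-- The set `M` of adapted claim processes. -/
def ClaimM (ℱ : Filtration (Fin (T + 1)) m0) : Set (Fin (T + 1) → Ω → ℝ) :=
  {c | StronglyAdapted ℱ c}

/-- The set `M₋` of almost surely nonpositive claim processes. -/
def Mminus (P : Measure Ω) (ℱ : Filtration (Fin (T + 1)) m0) :
    Set (Fin (T + 1) → Ω → ℝ) :=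
  {c | c ∈ ClaimM ℱ ∧ ∀ t, ∀ᵐ ω ∂P, c t ω ≤ 0}

/-- The superhedging cost `π(c) = inf {α ∈ ℝ | c - α • p ∈ C} ∈ [-∞,+∞]`. -/
def shc {Ω : Type*} {T : ℕ} (C : Set (Fin (T + 1) → Ω → ℝ))
    (p c : Fin (T + 1) → Ω → ℝ) : EReal :=
  sInf ((fun α : ℝ => (α : EReal)) '' {α : ℝ | c - α • p ∈ C})

/-- The portfolio held before time `t`, with the convention `x₋₁ = 0`. -/
def prevP {Ω : Type*} {T : ℕ} {E : Type*} [Zero E]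
    (x : Fin (T + 1) → Ω → E) (t : Fin (T + 1)) : Ω → E :=
  if t.1 = 0 then 0 else x ⟨t.1 - 1, lt_of_le_of_lt (Nat.sub_le _ _) t.isLt⟩

variable {J : Type*} [Fintype J]

/-- The set of claim processes superhedgeable with zero cost in the linear unconstrained
market with price process `s`. -/
def CsetLin (P : Measure Ω) (ℱ : Filtration (Fin (T + 1)) m0)
    (s : Fin (T + 1) → Ω → (J → ℝ)) : Set (Fin (T + 1) → Ω → ℝ) :=
  {c | c ∈ ClaimM ℱ ∧ ∃ x : Fin (T + 1) → Ω → (J → ℝ), StronglyAdapted ℱ x ∧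
    x (Fin.last T) = 0 ∧
    ∀ᵐ ω ∂P, ∀ t, (∑ j, s t ω j * (x t ω j - prevP x t ω j)) + c t ω ≤ 0}

/-- The set `M¹` of integrable claim processes. -/
def M1 (P : Measure Ω) (ℱ : Filtration (Fin (T + 1)) m0) :
    Set (Fin (T + 1) → Ω → ℝ) :=
  {c | c ∈ ClaimM ℱ ∧ ∀ t, Integrable (c t) P}

/-- The set `M^∞` of essentially bounded claim processes. -/
def Minf (P : Measure Ω) (ℱ : Filtration (Fin (T + 1)) m0) :
    Set (Fin (T + 1) → Ω → ℝ) :=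
  {c | c ∈ ClaimM ℱ ∧ ∀ t, MemLp (c t) ⊤ P}

/-- The bilinear pairing `E ∑ₜ cₜ yₜ`. -/
def pairing (P : Measure Ω) (c y : Fin (T + 1) → Ω → ℝ) : ℝ :=
  ∫ ω, ∑ t, c t ω * y t ω ∂P



section Aux

/-- An essentially bounded function admits an a.e. bound. -/
lemma exists_ae_bound_of_memtop {P : Measure Ω} {f : Ω → ℝ} (h : MemLp f ⊤ P) :
    ∃ C : ℝ, 0 ≤ C ∧ ∀ᵐ ω ∂P, |f ω| ≤ C := by
  refine ⟨(eLpNormEssSup f P).toReal, ENNReal.toReal_nonneg, ?_⟩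
  have hlt : eLpNormEssSup f P < ⊤ := by
    have := h.2
    rwa [eLpNorm_exponent_top] at this
  filter_upwards [ae_le_eLpNormEssSup (f := f) (μ := P)] with ω hω
  have : (‖f ω‖₊ : ℝ≥0∞).toReal ≤ (eLpNormEssSup f P).toReal :=
    ENNReal.toReal_mono hlt.ne hω
  simpa [Real.norm_eq_abs] using this


/-- Abel summation. -/
lemma abel_sum {T : ℕ} (a b : Fin (T + 1) → ℝ) (hb : b (Fin.last T) = 0) :
    ∑ t : Fin (T + 1), a t * (b t -
      (if t.1 = 0 then 0 else b ⟨t.1 - 1, lt_of_le_of_lt (Nat.sub_le _ _) t.isLt⟩)) =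
    ∑ t : Fin T, (a t.castSucc - a t.succ) * b t.castSucc := by
  have h1 : ∑ t : Fin (T + 1), a t *
      (if t.1 = 0 then 0 else b ⟨t.1 - 1, lt_of_le_of_lt (Nat.sub_le _ _) t.isLt⟩) =
      ∑ t : Fin T, a t.succ * b t.castSucc := by
    rw [Fin.sum_univ_succ]
    simp only [Fin.val_zero, if_pos, mul_zero, zero_add]
    refine Finset.sum_congr rfl fun t _ => ?_
    have hv : (t.succ : Fin (T + 1)).1 = t.1 + 1 := rfl
    rw [if_neg (by simp [hv])]
    congr 1
  have h2 : ∑ t : Fin (T + 1), a t * b t = ∑ t : Fin T, a t.castSucc * b t.castSucc := by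
    rw [Fin.sum_univ_castSucc, hb, mul_zero, add_zero]
  simp only [mul_sub, sub_mul, Finset.sum_sub_distrib]
  rw [h1, h2]

/-- The pointwise summation-by-parts identity for the hedging cost. -/
lemma pointwise_abel {T : ℕ} {J : Type*} [Fintype J]
    (yv : Fin (T + 1) → ℝ) (sv xx : Fin (T + 1) → J → ℝ) (hlast : xx (Fin.last T) = 0) :
    ∑ t : Fin (T + 1), yv t * (-(∑ j, sv t j * (xx t j -
      (if t.1 = 0 then 0 else xx ⟨t.1 - 1, lt_of_le_of_lt (Nat.sub_le _ _) t.isLt⟩ j)))) =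
    ∑ t : Fin T, ∑ j, xx t.castSucc j *
      ((yv t.succ * sv t.succ j) - (yv t.castSucc * sv t.castSucc j)) := by
  have habel : ∀ j, ∑ t : Fin (T + 1), (yv t * sv t j) * (xx t j -
      (if t.1 = 0 then 0 else xx ⟨t.1 - 1, lt_of_le_of_lt (Nat.sub_le _ _) t.isLt⟩ j)) =
      ∑ t : Fin T, ((yv t.castSucc * sv t.castSucc j) - (yv t.succ * sv t.succ j)) *
        xx t.castSucc j := by
    intro j
    exact abel_sum (fun t => yv t * sv t j) (fun t => xx t j) (by show xx (Fin.last T) j = 0; rw [hlast]; rfl)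
  calc ∑ t : Fin (T + 1), yv t * (-(∑ j, sv t j * (xx t j -
        (if t.1 = 0 then 0 else xx ⟨t.1 - 1, lt_of_le_of_lt (Nat.sub_le _ _) t.isLt⟩ j))))
      = -∑ t : Fin (T + 1), ∑ j, (yv t * sv t j) * (xx t j -
        (if t.1 = 0 then 0 else xx ⟨t.1 - 1, lt_of_le_of_lt (Nat.sub_le _ _) t.isLt⟩ j)) := by
        rw [← Finset.sum_neg_distrib]
        refine Finset.sum_congr rfl fun t _ => ?_
        rw [mul_neg, neg_inj, Finset.mul_sum]
        exact Finset.sum_congr rfl fun j _ => (mul_assoc _ _ _).symm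
    _ = -∑ j, ∑ t : Fin (T + 1), (yv t * sv t j) * (xx t j -
        (if t.1 = 0 then 0 else xx ⟨t.1 - 1, lt_of_le_of_lt (Nat.sub_le _ _) t.isLt⟩ j)) := by
        rw [Finset.sum_comm]
    _ = -∑ j, ∑ t : Fin T, ((yv t.castSucc * sv t.castSucc j) - (yv t.succ * sv t.succ j)) *
        xx t.castSucc j := by
        rw [Finset.sum_congr rfl fun j _ => habel j]
    _ = ∑ j, ∑ t : Fin T, xx t.castSucc j *
        ((yv t.succ * sv t.succ j) - (yv t.castSucc * sv t.castSucc j)) := by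
        rw [← Finset.sum_neg_distrib]
        refine Finset.sum_congr rfl fun j _ => ?_
        rw [← Finset.sum_neg_distrib]
        refine Finset.sum_congr rfl fun t _ => ?_
        ring
    _ = ∑ t : Fin T, ∑ j, xx t.castSucc j *
        ((yv t.succ * sv t.succ j) - (yv t.castSucc * sv t.castSucc j)) := Finset.sum_comm


lemma component_sm {ℱ : Filtration (Fin (T + 1)) m0} {f : Ω → J → ℝ} {i : Fin (T + 1)}
    (hf : StronglyMeasurable[ℱ i] f) (j : J) :
    StronglyMeasurable[ℱ i] (fun ω => f ω j) :=
  (continuous_apply j).comp_stronglyMeasurable hf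

lemma component_int {P : Measure Ω} {f : Ω → J → ℝ} (hf : Integrable f P) (j : J) :
    Integrable (fun ω => f ω j) P :=
  (ContinuousLinearMap.proj (R := ℝ) (φ := fun _ : J => ℝ) j).integrable_comp hf

lemma component_condexp {P : Measure Ω} [IsProbabilityMeasure P]
    {ℱ : Filtration (Fin (T + 1)) m0} {m : Fin (T + 1) → Ω → J → ℝ}
    (hm : Martingale m ℱ P) {i k : Fin (T + 1)} (hik : i ≤ k) (j : J) :
    P[fun ω => m k ω j|ℱ i] =ᵐ[P] fun ω => m i ω j := by
  refine (ae_eq_condExp_of_forall_setIntegral_eq (ℱ.le i)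
    (component_int (hm.integrable k) j) (fun A hA _ => ?_) (fun A hA _ => ?_) ?_).symm
  · exact (component_int (hm.integrable i) j).integrableOn
  · have h1 := (ContinuousLinearMap.proj (R := ℝ) (φ := fun _ : J => ℝ) j).integral_comp_comm
      ((hm.integrable i).restrict (s := A))
    have h2 := (ContinuousLinearMap.proj (R := ℝ) (φ := fun _ : J => ℝ) j).integral_comp_comm
      ((hm.integrable k).restrict (s := A))
    simp only [ContinuousLinearMap.proj_apply] at h1 h2
    rw [h1, h2, hm.setIntegral_eq hik hA]
  · exact (component_sm (hm.stronglyAdapted i) j).aestronglyMeasurable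

lemma integral_mul_increment_zero {P : Measure Ω} [IsProbabilityMeasure P]
    {ℱ : Filtration (Fin (T + 1)) m0} {m : Fin (T + 1) → Ω → J → ℝ}
    (hm : Martingale m ℱ P) {i k : Fin (T + 1)} (hik : i ≤ k) (j : J)
    {f : Ω → ℝ} (hfm : StronglyMeasurable[ℱ i] f) {C : ℝ} (hfb : ∀ ω, |f ω| ≤ C) :
    ∫ ω, f ω * (m k ω j - m i ω j) ∂P = 0 := by
  have hmk : Integrable (fun ω => m k ω j) P := component_int (hm.integrable k) j
  have hmi : Integrable (fun ω => m i ω j) P := component_int (hm.integrable i) j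
  have h1 : Integrable (fun ω => m k ω j - m i ω j) P := hmk.sub hmi
  have hprod : Integrable (fun ω => f ω * (m k ω j - m i ω j)) P :=
    h1.bdd_mul ((hfm.mono (ℱ.le i)).aestronglyMeasurable)
      (Eventually.of_forall (fun ω => (Real.norm_eq_abs _).le.trans
        ((Real.norm_eq_abs (f ω)) ▸ hfb ω)))
  have hce : P[fun ω => f ω * (m k ω j - m i ω j)|ℱ i] =ᵐ[P]
      fun ω => f ω * ((P[fun ω => m k ω j - m i ω j|ℱ i]) ω) :=
    condExp_mul_of_stronglyMeasurable_left hfm hprod h1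
  have h0 : P[fun ω => m k ω j - m i ω j|ℱ i] =ᵐ[P] 0 := by
    have hrfl : (fun ω => m k ω j - m i ω j) = (fun ω => m k ω j) - (fun ω => m i ω j) := rfl
    rw [hrfl]
    have hsub := condExp_sub (m := ℱ i) (μ := P) hmk hmi
    have h2 := component_condexp hm hik j
    have h3 := component_condexp hm (le_refl i) j
    filter_upwards [hsub, h2, h3] with ω hω h2ω h3ω
    simp only [Pi.sub_apply] at hω
    simp [hω, h2ω, h3ω]
  rw [← integral_condExp (ℱ.le i)]
  have : P[fun ω => f ω * (m k ω j - m i ω j)|ℱ i] =ᵐ[P] 0 := by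
    filter_upwards [hce, h0] with ω hω h0ω
    simp [hω, h0ω]
  rw [integral_congr_ae this]
  simp


/-- Key lemma: a martingale transform dominating an integrable function from above
forces nonpositive expectation. -/
lemma transform_nonpos {P : Measure Ω} [IsProbabilityMeasure P]
    {ℱ : Filtration (Fin (T + 1)) m0} {m : Fin (T + 1) → Ω → J → ℝ}
    (hm : Martingale m ℱ P) (x : Fin (T + 1) → Ω → J → ℝ) (hx : StronglyAdapted ℱ x)
    (g : Ω → ℝ) (hg : Integrable g P)
    (hle : ∀ᵐ ω ∂P, g ω ≤ ∑ t : Fin T, ∑ j,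
      x t.castSucc ω j * (m t.succ ω j - m t.castSucc ω j)) :
    ∫ ω, g ω ∂P ≤ 0 := by
  suffices H : ∀ n : ℕ, ∀ x : Fin (T + 1) → Ω → J → ℝ, StronglyAdapted ℱ x →
      ∀ g : Ω → ℝ, Integrable g P →
      (∀ᵐ ω ∂P, g ω ≤ ∑ t ∈ Finset.univ.filter (fun t : Fin T => T - n ≤ t.1), ∑ j,
        x t.castSucc ω j * (m t.succ ω j - m t.castSucc ω j)) → ∫ ω, g ω ∂P ≤ 0 by
    refine H T x hx g hg ?_
    have : Finset.univ.filter (fun t : Fin T => T - T ≤ t.1) = Finset.univ := by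
      ext t; simp
    rw [this]
    exact hle
  intro n
  induction n with
  | zero =>
    intro x hx g hg hle
    have hempty : Finset.univ.filter (fun t : Fin T => T - 0 ≤ t.1) = ∅ := by
      ext t; simp [Nat.not_le.mpr t.isLt]
    rw [hempty] at hle
    simp only [Finset.sum_empty] at hle
    exact integral_nonpos_of_ae hle
  | succ n ih =>
    intro x hx g hg hle
    by_cases hTn : T ≤ n
    · refine ih x hx g hg ?_
      have : T - (n + 1) = T - n := by omega
      rwa [this] at hle
    push_neg at hTn
    set k := T - (n + 1) with hk_def
    have hkT : k < T := by omega
    have hkn : T - n = k + 1 := by omega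
    set tk : Fin T := ⟨k, hkT⟩ with htk_def
    -- split the filtered sum at tk
    have hsplit : Finset.univ.filter (fun t : Fin T => T - (n + 1) ≤ t.1) =
        insert tk (Finset.univ.filter (fun t : Fin T => T - n ≤ t.1)) := by
      ext t
      simp only [Finset.mem_filter, Finset.mem_univ, true_and, Finset.mem_insert]
      constructor
      · intro h
        rcases eq_or_lt_of_le h with h' | h'
        · left; exact Fin.ext h'.symm
        · right; omega
      · rintro (rfl | h)
        · show T - (n + 1) ≤ k
          omega
        · omega
    have htk_not : tk ∉ Finset.univ.filter (fun t : Fin T => T - n ≤ t.1) := by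
      intro hmem
      rw [Finset.mem_filter] at hmem
      have : T - n ≤ k := hmem.2
      omega
    -- measurable sets A i
    set D : Ω → ℝ := fun ω => ∑ j, x tk.castSucc ω j * (m tk.succ ω j - m tk.castSucc ω j)
      with hD_def
    set A : ℕ → Set Ω := fun i => {ω | ∀ j, |x tk.castSucc ω j| ≤ (i : ℝ)} with hA_def
    have hA_meas : ∀ i, MeasurableSet[ℱ tk.castSucc] (A i) := by
      intro i
      have : A i = ⋂ j, {ω | ‖x tk.castSucc ω j‖ ≤ (i : ℝ)} := by
        ext ω; simp [hA_def, Real.norm_eq_abs]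
      rw [this]
      refine MeasurableSet.iInter fun j => ?_
      exact (component_sm (hx tk.castSucc) j).norm.measurableSet_le stronglyMeasurable_const
    have hA_meas0 : ∀ i, MeasurableSet (A i) := fun i => ℱ.le _ _ (hA_meas i)
    -- truncated strategy
    have hcast_le : ∀ u : Fin (T + 1), k + 1 ≤ u.1 → tk.castSucc ≤ u := by
      intro u hu
      rw [Fin.le_def]
      simp only [Fin.coe_castSucc, Fin.val_mk]
      exact Nat.le_of_succ_le hu
    have hcs_le : tk.castSucc ≤ tk.succ := (Fin.castSucc_lt_succ (i := tk)).le
    have key : ∀ i : ℕ, ∫ ω, (A i).indicator g ω ∂P ≤ 0 := by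
      intro i
      set xi : Fin (T + 1) → Ω → J → ℝ :=
        fun u ω => if k + 1 ≤ u.1 then (A i).indicator (x u) ω else 0 with hxi_def
      have hxi : StronglyAdapted ℱ xi := by
        intro u
        by_cases hu : k + 1 ≤ u.1
        · have : xi u = (A i).indicator (x u) := by funext ω; simp [hxi_def, hu, show k < u.1 by omega]
          rw [this]
          exact (hx u).indicator (ℱ.mono (hcast_le u hu) _ (hA_meas i))
        · have : xi u = fun _ => 0 := by funext ω; simp [hxi_def, hu, show ¬ k < u.1 by omega]
          rw [this]; exact stronglyMeasurable_const
      set gi : Ω → ℝ := fun ω => (A i).indicator g ω -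
        ∑ j, ((A i).indicator (fun ω' => x tk.castSucc ω' j) ω) *
          (m tk.succ ω j - m tk.castSucc ω j) with hgi_def
      have hxbnd : ∀ j ω, |(A i).indicator (fun ω' => x tk.castSucc ω' j) ω| ≤ (i : ℝ) := by
        intro j ω
        by_cases hω : ω ∈ A i
        · rw [Set.indicator_of_mem hω]; exact hω j
        · rw [Set.indicator_of_notMem hω]; simp
      have hxmeas : ∀ j, StronglyMeasurable[ℱ tk.castSucc]
          ((A i).indicator (fun ω' => x tk.castSucc ω' j)) :=
        fun j => (component_sm (hx tk.castSucc) j).indicator (hA_meas i)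
      have hterm_int : ∀ j, Integrable (fun ω =>
          ((A i).indicator (fun ω' => x tk.castSucc ω' j) ω) *
          (m tk.succ ω j - m tk.castSucc ω j)) P := by
        intro j
        exact ((component_int (hm.integrable tk.succ) j).sub
          (component_int (hm.integrable tk.castSucc) j)).bdd_mul
          ((hxmeas j).mono (ℱ.le _)).aestronglyMeasurable
          (Eventually.of_forall fun ω => by rw [Real.norm_eq_abs]; exact hxbnd j ω)
      have hgi_int : Integrable gi P :=
        (hg.indicator (hA_meas0 i)).sub (integrable_finset_sum _ fun j _ => hterm_int j)
      have hgi_le : ∀ᵐ ω ∂P, gi ω ≤ ∑ t ∈ Finset.univ.filter (fun t : Fin T => T - n ≤ t.1),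
          ∑ j, xi t.castSucc ω j * (m t.succ ω j - m t.castSucc ω j) := by
        filter_upwards [hle] with ω hω
        by_cases hωA : ω ∈ A i
        · have h1 : gi ω = g ω - D ω := by
            simp only [hgi_def, hD_def, Set.indicator_of_mem hωA]
          have h2 : ∑ t ∈ Finset.univ.filter (fun t : Fin T => T - n ≤ t.1),
              ∑ j, xi t.castSucc ω j * (m t.succ ω j - m t.castSucc ω j) =
              ∑ t ∈ Finset.univ.filter (fun t : Fin T => T - n ≤ t.1),
              ∑ j, x t.castSucc ω j * (m t.succ ω j - m t.castSucc ω j) := by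
            refine Finset.sum_congr rfl fun t ht => ?_
            refine Finset.sum_congr rfl fun j _ => ?_
            have htn : k + 1 ≤ t.1 := by
              simp only [Finset.mem_filter] at ht
              omega
            simp [hxi_def, htn, show k < t.1 by omega, Set.indicator_of_mem hωA]
          rw [hsplit, Finset.sum_insert htk_not] at hω
          rw [h1, h2]
          have : (∑ j, x tk.castSucc ω j * (m tk.succ ω j - m tk.castSucc ω j)) = D ω := rfl
          rw [this] at hω
          linarith
        · have h1 : gi ω = 0 := by
            simp [hgi_def, Set.indicator_of_notMem hωA]
          have h2 : ∀ t ∈ Finset.univ.filter (fun t : Fin T => T - n ≤ t.1),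
              ∑ j, xi t.castSucc ω j * (m t.succ ω j - m t.castSucc ω j) = 0 := by
            intro t ht
            refine Finset.sum_eq_zero fun j _ => ?_
            have htn : k + 1 ≤ t.1 := by
              simp only [Finset.mem_filter] at ht
              omega
            simp [hxi_def, htn, show k < t.1 by omega, Set.indicator_of_notMem hωA]
          rw [h1, Finset.sum_congr rfl h2]
          simp
      have hih := ih xi hxi gi hgi_int hgi_le
      have hInt_eq : ∫ ω, gi ω ∂P = ∫ ω, (A i).indicator g ω ∂P := by
        rw [hgi_def]
        rw [integral_sub (hg.indicator (hA_meas0 i))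
          (integrable_finset_sum _ fun j _ => hterm_int j)]
        rw [integral_finset_sum _ fun j _ => hterm_int j]
        have hz : ∀ j, ∫ ω, ((A i).indicator (fun ω' => x tk.castSucc ω' j) ω) *
            (m tk.succ ω j - m tk.castSucc ω j) ∂P = 0 := fun j =>
          integral_mul_increment_zero hm hcs_le j (hxmeas j) (hxbnd j)
        simp [hz]
      rw [hInt_eq] at hih
      exact hih
    have htend : Tendsto (fun i => ∫ ω, (A i).indicator g ω ∂P) atTop (𝓝 (∫ ω, g ω ∂P)) := by
      refine tendsto_integral_of_dominated_convergence (fun ω => |g ω|)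
        (fun i => hg.1.indicator (hA_meas0 i)) hg.abs ?_ ?_
      · intro i
        filter_upwards with ω
        rw [Real.norm_eq_abs]
        by_cases hω : ω ∈ A i
        · rw [Set.indicator_of_mem hω]
        · rw [Set.indicator_of_notMem hω]; simp [abs_nonneg]
      · filter_upwards with ω
        obtain ⟨N, hN⟩ := exists_nat_ge ‖x tk.castSucc ω‖
        refine tendsto_const_nhds.congr' ?_
        filter_upwards [eventually_ge_atTop N] with i hi
        have hωA : ω ∈ A i := by
          intro j
          calc |x tk.castSucc ω j| = ‖x tk.castSucc ω j‖ := (Real.norm_eq_abs _).symm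
            _ ≤ ‖x tk.castSucc ω‖ := norm_le_pi_norm _ j
            _ ≤ (N : ℝ) := hN
            _ ≤ (i : ℝ) := Nat.cast_le.mpr hi
        rw [Set.indicator_of_mem hωA]
    exact le_of_tendsto' htend key


lemma prevP_apply {E : Type*} [Zero E] (x : Fin (T + 1) → Ω → E) (t : Fin (T + 1)) (ω : Ω) :
    prevP x t ω =
      if t.1 = 0 then 0 else x ⟨t.1 - 1, lt_of_le_of_lt (Nat.sub_le _ _) t.isLt⟩ ω := by
  unfold prevP; split <;> rfl

lemma setIntegral_step {P : Measure Ω} [IsProbabilityMeasure P]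
    {ℱ : Filtration (Fin (T + 1)) m0}
    {s : Fin (T + 1) → Ω → J → ℝ} (hs : StronglyAdapted ℱ s) (hsint : ∀ t, Integrable (s t) P)
    {y : Fin (T + 1) → Ω → ℝ} (hyM : StronglyAdapted ℱ y) (hybnd : ∀ t, MemLp (y t) ⊤ P)
    (hpolar : ∀ c ∈ CsetLin P ℱ s ∩ M1 P ℱ, pairing P c y ≤ 0)
    (t : Fin T) (j : J) {A : Set Ω} (hA : MeasurableSet[ℱ t.castSucc] A) :
    ∫ ω in A, y t.succ ω * s t.succ ω j ∂P =
      ∫ ω in A, y t.castSucc ω * s t.castSucc ω j ∂P := by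
  letI : DecidableEq J := Classical.decEq J
  set tc : Fin (T + 1) := t.castSucc with htc_def
  set ts : Fin (T + 1) := t.succ with hts_def
  have htc_val : tc.1 = t.1 := rfl
  have hts_val : ts.1 = t.1 + 1 := rfl
  have htcts : tc ≠ ts := (Fin.castSucc_lt_succ (i := t)).ne
  have htc_le_ts : tc ≤ ts := (Fin.castSucc_lt_succ (i := t)).le
  have hA0 : MeasurableSet A := ℱ.le tc A hA
  have hyst : ∀ u : Fin (T + 1), Integrable (fun ω => y u ω * s u ω j) P := by
    intro u
    obtain ⟨C, _, hC⟩ := exists_ae_bound_of_memtop (hybnd u)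
    exact (component_int (hsint u) j).bdd_mul
      ((hyM u).mono (ℱ.le u)).aestronglyMeasurable
      (by filter_upwards [hC] with ω h; rwa [Real.norm_eq_abs])
  have hI1 : Integrable (A.indicator (fun ω' => y ts ω' * s ts ω' j)) P :=
    (hyst ts).indicator hA0
  have hI2 : Integrable (A.indicator (fun ω' => y tc ω' * s tc ω' j)) P :=
    (hyst tc).indicator hA0
  have main : ∀ σ : ℝ, ∫ ω, σ * (A.indicator (fun ω' => y ts ω' * s ts ω' j) ω -
      A.indicator (fun ω' => y tc ω' * s tc ω' j) ω) ∂P ≤ 0 := by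
    intro σ
    set c : Fin (T + 1) → Ω → ℝ := fun u ω =>
      if u = tc then -(A.indicator (fun ω' => σ * s tc ω' j) ω)
      else if u = ts then A.indicator (fun ω' => σ * s ts ω' j) ω else 0 with hc_def
    set xP : Fin (T + 1) → Ω → J → ℝ := fun u ω =>
      if u = tc then A.indicator (fun _ => σ • (Pi.single j 1 : J → ℝ)) ω else 0 with hx_def
    have hsum_single : ∀ (u : Fin (T + 1)) (ω : Ω),
        ∑ j', s u ω j' * (σ • (Pi.single j 1 : J → ℝ)) j' = σ * s u ω j := by
      intro u ω
      rw [Finset.sum_eq_single j]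
      · simp only [Pi.smul_apply, Pi.single_eq_same, smul_eq_mul, mul_one]; ring
      · intro b _ hb
        simp [Pi.single_eq_of_ne hb]
      · intro h; exact absurd (Finset.mem_univ j) h
    have hcadp : StronglyAdapted ℱ c := by
      intro u
      by_cases h1 : u = tc
      · subst h1
        have : c tc = fun ω => -(A.indicator (fun ω' => σ * s tc ω' j) ω) := by
          funext ω; simp [hc_def]
        rw [this]
        exact (((component_sm (hs tc) j).const_mul σ).indicator hA).neg
      · by_cases h2 : u = ts
        · subst h2
          have : c ts = fun ω => A.indicator (fun ω' => σ * s ts ω' j) ω := by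
            funext ω; simp [hc_def, htcts.symm]
          rw [this]
          exact ((component_sm (hs ts) j).const_mul σ).indicator (ℱ.mono htc_le_ts A hA)
        · have : c u = fun _ => 0 := by funext ω; simp [hc_def, h1, h2]
          rw [this]; exact stronglyMeasurable_const
    have hcint : ∀ u, Integrable (c u) P := by
      intro u
      by_cases h1 : u = tc
      · subst h1
        have : c tc = fun ω => -(A.indicator (fun ω' => σ * s tc ω' j) ω) := by
          funext ω; simp [hc_def]
        rw [this]
        exact (((component_int (hsint tc) j).const_mul σ).indicator hA0).neg
      · by_cases h2 : u = ts
        · subst h2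
          have : c ts = fun ω => A.indicator (fun ω' => σ * s ts ω' j) ω := by
            funext ω; simp [hc_def, htcts.symm]
          rw [this]
          exact ((component_int (hsint ts) j).const_mul σ).indicator hA0
        · have : c u = fun _ => 0 := by funext ω; simp [hc_def, h1, h2]
          rw [this]; exact integrable_const 0
    have hxadp : StronglyAdapted ℱ xP := by
      intro u
      by_cases h1 : u = tc
      · subst h1
        have : xP tc = fun ω => A.indicator (fun _ => σ • (Pi.single j 1 : J → ℝ)) ω := by
          funext ω; simp [hx_def]
        rw [this]
        exact stronglyMeasurable_const.indicator hA
      · have : xP u = fun _ => 0 := by funext ω; simp [hx_def, h1]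
        rw [this]; exact stronglyMeasurable_const
    have hxlast : xP (Fin.last T) = 0 := by
      have hne : Fin.last T ≠ tc := by
        intro hcontra
        have := congrArg Fin.val hcontra
        simp only [Fin.val_last, htc_val] at this
        exact absurd this.symm t.isLt.ne
      funext ω; simp [hx_def, hne]
    have hsh : ∀ᵐ ω ∂P, ∀ u, (∑ j', s u ω j' * (xP u ω j' - prevP xP u ω j')) + c u ω ≤ 0 := by
      refine ae_of_all _ fun ω u => ?_
      have hzero : (∑ j', s u ω j' * (xP u ω j' - prevP xP u ω j')) + c u ω = 0 := by
        by_cases h1 : u = tc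
        · subst h1
          have hprev : prevP xP tc ω = 0 := by
            rw [prevP_apply]
            split
            · rfl
            · rename_i h0
              have hne : (⟨tc.1 - 1, lt_of_le_of_lt (Nat.sub_le _ _) tc.isLt⟩ :
                  Fin (T + 1)) ≠ tc := by
                intro hcontra
                have := congrArg Fin.val hcontra
                simp only [Fin.val_mk] at this
                omega
              simp [hx_def, hne]
          by_cases hωA : ω ∈ A
          · have hxv : xP tc ω = σ • (Pi.single j 1 : J → ℝ) := by
              simp [hx_def, Set.indicator_of_mem hωA]
            have hcv : c tc ω = -(σ * s tc ω j) := by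
              simp [hc_def, Set.indicator_of_mem hωA]
            rw [hprev, hxv, hcv]
            simp only [Pi.zero_apply, sub_zero]
            rw [hsum_single]; ring
          · have hxv : xP tc ω = 0 := by simp [hx_def, Set.indicator_of_notMem hωA]
            have hcv : c tc ω = 0 := by simp [hc_def, Set.indicator_of_notMem hωA]
            rw [hprev, hxv, hcv]; simp
        · by_cases h2 : u = ts
          · subst h2
            have hxv : xP ts ω = 0 := by simp [hx_def, htcts.symm]
            have hprev : prevP xP ts ω = xP tc ω := by
              rw [prevP_apply, if_neg (by omega : ¬ts.1 = 0)]
              have hfe : (⟨ts.1 - 1, lt_of_le_of_lt (Nat.sub_le _ _) ts.isLt⟩ :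
                  Fin (T + 1)) = tc := by
                apply Fin.ext
                simp only [Fin.val_mk, hts_val, htc_val]
                omega
              rw [hfe]
            rw [hxv, hprev]
            by_cases hωA : ω ∈ A
            · have hxv2 : xP tc ω = σ • (Pi.single j 1 : J → ℝ) := by
                simp [hx_def, Set.indicator_of_mem hωA]
              have hcv : c ts ω = σ * s ts ω j := by
                simp [hc_def, htcts.symm, Set.indicator_of_mem hωA]
              rw [hxv2, hcv]
              simp only [Pi.zero_apply, zero_sub, mul_neg]
              rw [Finset.sum_neg_distrib, hsum_single]
              ring
            · have hxv2 : xP tc ω = 0 := by simp [hx_def, Set.indicator_of_notMem hωA]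
              have hcv : c ts ω = 0 := by
                simp [hc_def, htcts.symm, Set.indicator_of_notMem hωA]
              rw [hxv2, hcv]; simp
          · have hxv : xP u ω = 0 := by simp [hx_def, h1]
            have hcv : c u ω = 0 := by simp [hc_def, h1, h2]
            have hprev : prevP xP u ω = 0 := by
              rw [prevP_apply]
              split
              · rfl
              · rename_i h0
                have hne : (⟨u.1 - 1, lt_of_le_of_lt (Nat.sub_le _ _) u.isLt⟩ :
                    Fin (T + 1)) ≠ tc := by
                  intro hcontra
                  apply h2
                  have hv := congrArg Fin.val hcontra
                  simp only [Fin.val_mk, htc_val] at hv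
                  apply Fin.ext
                  rw [hts_val]
                  omega
                simp [hx_def, hne]
            rw [hxv, hprev, hcv]; simp
      exact hzero.le
    have hcmem : c ∈ CsetLin P ℱ s ∩ M1 P ℱ :=
      ⟨⟨hcadp, xP, hxadp, hxlast, hsh⟩, hcadp, hcint⟩
    have hpair : pairing P c y ≤ 0 := hpolar c hcmem
    have hsum : ∀ ω, ∑ u, c u ω * y u ω =
        σ * (A.indicator (fun ω' => y ts ω' * s ts ω' j) ω -
          A.indicator (fun ω' => y tc ω' * s tc ω' j) ω) := by
      intro ω
      have hpt : ∀ u : Fin (T + 1), c u ω * y u ω =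
          (if u = tc then -(A.indicator (fun ω' => σ * s tc ω' j) ω) * y tc ω else 0) +
          (if u = ts then (A.indicator (fun ω' => σ * s ts ω' j) ω) * y ts ω else 0) := by
        intro u
        by_cases h1 : u = tc
        · subst h1
          rw [if_pos rfl, if_neg htcts]
          simp [hc_def]
        · by_cases h2 : u = ts
          · subst h2
            rw [if_neg h1, if_pos rfl]
            simp [hc_def, h1]
          · rw [if_neg h1, if_neg h2]
            simp [hc_def, h1, h2]
      rw [Finset.sum_congr rfl fun u _ => hpt u, Finset.sum_add_distrib,
        Finset.sum_ite_eq' Finset.univ tc, Finset.sum_ite_eq' Finset.univ ts]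
      simp only [Finset.mem_univ, if_true]
      by_cases hωA : ω ∈ A
      · simp only [Set.indicator_of_mem hωA]; ring
      · simp only [Set.indicator_of_notMem hωA]; ring
    have hpair2 : ∫ ω, σ * (A.indicator (fun ω' => y ts ω' * s ts ω' j) ω -
        A.indicator (fun ω' => y tc ω' * s tc ω' j) ω) ∂P ≤ 0 := by
      have : pairing P c y = ∫ ω, σ * (A.indicator (fun ω' => y ts ω' * s ts ω' j) ω -
          A.indicator (fun ω' => y tc ω' * s tc ω' j) ω) ∂P :=
        integral_congr_ae (ae_of_all _ hsum)
      linarith [hpair, this.symm.le, this.le]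
    exact hpair2
  have h1 := main 1
  have h2 := main (-1)
  have heq1 : ∫ ω, (1 : ℝ) * (A.indicator (fun ω' => y ts ω' * s ts ω' j) ω -
      A.indicator (fun ω' => y tc ω' * s tc ω' j) ω) ∂P =
      ∫ ω, A.indicator (fun ω' => y ts ω' * s ts ω' j) ω ∂P -
      ∫ ω, A.indicator (fun ω' => y tc ω' * s tc ω' j) ω ∂P := by
    simp only [one_mul]
    exact integral_sub hI1 hI2
  have heq2 : ∫ ω, (-1 : ℝ) * (A.indicator (fun ω' => y ts ω' * s ts ω' j) ω -
      A.indicator (fun ω' => y tc ω' * s tc ω' j) ω) ∂P =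
      -(∫ ω, A.indicator (fun ω' => y ts ω' * s ts ω' j) ω ∂P -
      ∫ ω, A.indicator (fun ω' => y tc ω' * s tc ω' j) ω ∂P) := by
    simp only [neg_one_mul]
    rw [integral_neg]
    congr 1
    exact integral_sub hI1 hI2
  rw [heq1] at h1
  rw [heq2] at h2
  have : ∫ ω, A.indicator (fun ω' => y ts ω' * s ts ω' j) ω ∂P =
      ∫ ω, A.indicator (fun ω' => y tc ω' * s tc ω' j) ω ∂P := by linarith
  rwa [integral_indicator hA0, integral_indicator hA0] at this


lemma setIntegral_pair {P : Measure Ω} [IsProbabilityMeasure P]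
    {ℱ : Filtration (Fin (T + 1)) m0}
    {s : Fin (T + 1) → Ω → J → ℝ} (hs : StronglyAdapted ℱ s) (hsint : ∀ t, Integrable (s t) P)
    {y : Fin (T + 1) → Ω → ℝ} (hyM : StronglyAdapted ℱ y) (hybnd : ∀ t, MemLp (y t) ⊤ P)
    (hpolar : ∀ c ∈ CsetLin P ℱ s ∩ M1 P ℱ, pairing P c y ≤ 0) (j : J) :
    ∀ d : ℕ, ∀ i u : Fin (T + 1), u.1 = i.1 + d → ∀ A : Set Ω, MeasurableSet[ℱ i] A →
      ∫ ω in A, y u ω * s u ω j ∂P = ∫ ω in A, y i ω * s i ω j ∂P := by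
  intro d
  induction d with
  | zero =>
    intro i u h A _
    have : u = i := Fin.ext (by omega)
    rw [this]
  | succ d ihd =>
    intro i u h A hA
    have hwlt : i.1 + d < T + 1 := by omega
    set w : Fin (T + 1) := ⟨i.1 + d, hwlt⟩ with hw_def
    have hwval : w.1 = i.1 + d := rfl
    have hwT : w.1 < T := by
      have := u.isLt
      omega
    set tw : Fin T := ⟨w.1, hwT⟩ with htw_def
    have hcast : tw.castSucc = w := Fin.ext rfl
    have hsucc : tw.succ = u := Fin.ext (by simp only [Fin.val_succ]; show w.1 + 1 = u.1; omega)
    have hiw : i ≤ w := by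
      rw [Fin.le_def, hwval]
      omega
    have hAw : MeasurableSet[ℱ tw.castSucc] A := by
      rw [hcast]; exact ℱ.mono hiw A hA
    have step := setIntegral_step hs hsint hyM hybnd hpolar tw j hAw
    rw [hcast, hsucc] at step
    rw [step, ihd i w rfl A hA]

lemma mart_of_polar {P : Measure Ω} [IsProbabilityMeasure P]
    {ℱ : Filtration (Fin (T + 1)) m0}
    {s : Fin (T + 1) → Ω → J → ℝ} (hs : StronglyAdapted ℱ s) (hsint : ∀ t, Integrable (s t) P)
    {y : Fin (T + 1) → Ω → ℝ} (hyM : StronglyAdapted ℱ y) (hybnd : ∀ t, MemLp (y t) ⊤ P)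
    (hpolar : ∀ c ∈ CsetLin P ℱ s ∩ M1 P ℱ, pairing P c y ≤ 0)
    (hint : ∀ u, Integrable (fun ω => y u ω • s u ω) P) :
    Martingale (fun t ω => y t ω • s t ω) ℱ P := by
  refine ⟨fun u => (hyM u).smul (hs u), fun i u hiu => ?_⟩
  refine (ae_eq_condExp_of_forall_setIntegral_eq (ℱ.le i) (hint u)
    (fun A hA _ => (hint i).integrableOn) (fun A hA _ => ?_)
    ((hyM i).smul (hs i)).aestronglyMeasurable).symm
  refine funext fun j => ?_
  have hpi : ∀ v : Fin (T + 1),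
      (∫ ω in A, y v ω • s v ω ∂P) j = ∫ ω in A, y v ω * s v ω j ∂P := by
    intro v
    have hc := (ContinuousLinearMap.proj (R := ℝ) (φ := fun _ : J => ℝ) j).integral_comp_comm
      ((hint v).integrableOn (s := A))
    simp only [ContinuousLinearMap.proj_apply] at hc
    rw [← hc]
    rfl
  rw [hpi i, hpi u]
  have hd : u.1 = i.1 + (u.1 - i.1) := by
    rw [Fin.le_def] at hiu
    omega
  exact (setIntegral_pair hs hsint hyM hybnd hpolar j (u.1 - i.1) i u hd A hA).symm

lemma nonneg_of_polar {P : Measure Ω} [IsProbabilityMeasure P]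
    {ℱ : Filtration (Fin (T + 1)) m0}
    {s : Fin (T + 1) → Ω → J → ℝ}
    {y : Fin (T + 1) → Ω → ℝ} (hyM : StronglyAdapted ℱ y) (hybnd : ∀ t, MemLp (y t) ⊤ P)
    (hpolar : ∀ c ∈ CsetLin P ℱ s ∩ M1 P ℱ, pairing P c y ≤ 0)
    (t : Fin (T + 1)) : ∀ᵐ ω ∂P, 0 ≤ y t ω := by
  have hyt : Integrable (y t) P := (hybnd t).integrable le_top
  have hAn : ∀ n : ℕ, P {ω | y t ω ≤ -(1 / ((n : ℝ) + 1))} = 0 := by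
    intro n
    set An := {ω | y t ω ≤ -(1 / ((n : ℝ) + 1))} with hAn_def
    have hAnm : MeasurableSet[ℱ t] An := (hyM t).measurableSet_le stronglyMeasurable_const
    have hAn0 : MeasurableSet An := ℱ.le t _ hAnm
    set c : Fin (T + 1) → Ω → ℝ :=
      fun u ω => if u = t then -(An.indicator (fun _ => (1 : ℝ)) ω) else 0 with hc_def
    have hcadp : StronglyAdapted ℱ c := by
      intro u
      by_cases h1 : u = t
      · subst h1
        have : c u = fun ω => -(An.indicator (fun _ => (1 : ℝ)) ω) := by
          funext ω; simp [hc_def]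
        rw [this]
        exact (stronglyMeasurable_const.indicator hAnm).neg
      · have : c u = fun _ => 0 := by funext ω; simp [hc_def, h1]
        rw [this]; exact stronglyMeasurable_const
    have hcint : ∀ u, Integrable (c u) P := by
      intro u
      by_cases h1 : u = t
      · subst h1
        have : c u = fun ω => -(An.indicator (fun _ => (1 : ℝ)) ω) := by
          funext ω; simp [hc_def]
        rw [this]
        exact ((integrable_const (1 : ℝ)).indicator hAn0).neg
      · have : c u = fun _ => 0 := by funext ω; simp [hc_def, h1]
        rw [this]; exact integrable_const 0
    have hsh : ∀ᵐ ω ∂P, ∀ u, (∑ j, s u ω j *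
        ((fun (_ : Fin (T + 1)) (_ : Ω) => (0 : J → ℝ)) u ω j -
          prevP (fun _ _ => (0 : J → ℝ)) u ω j)) + c u ω ≤ 0 := by
      refine ae_of_all _ fun ω u => ?_
      have hprev : prevP (fun (_ : Fin (T + 1)) (_ : Ω) => (0 : J → ℝ)) u ω = 0 := by
        rw [prevP_apply]; split <;> rfl
      rw [hprev]
      simp only [Pi.zero_apply, sub_zero, mul_zero, Finset.sum_const_zero, zero_add]
      by_cases h1 : u = t
      · subst h1
        simp only [hc_def, if_pos rfl, neg_nonpos]
        exact Set.indicator_nonneg (fun _ _ => zero_le_one) ω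
      · simp [hc_def, h1]
    have hcmem : c ∈ CsetLin P ℱ s ∩ M1 P ℱ :=
      ⟨⟨hcadp, fun _ _ => (0 : J → ℝ), fun _ => stronglyMeasurable_const, rfl, hsh⟩,
        hcadp, hcint⟩
    have hpair : pairing P c y ≤ 0 := hpolar c hcmem
    have hsum : ∀ ω, ∑ u, c u ω * y u ω = -(An.indicator (y t) ω) := by
      intro ω
      rw [Finset.sum_eq_single t]
      · by_cases hωA : ω ∈ An
        · simp [hc_def, Set.indicator_of_mem hωA]
        · simp [hc_def, Set.indicator_of_notMem hωA]
      · intro b _ hb; simp [hc_def, hb]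
      · intro h; exact absurd (Finset.mem_univ t) h
    have hpair2 : 0 ≤ ∫ ω in An, y t ω ∂P := by
      have he : pairing P c y = -∫ ω in An, y t ω ∂P := by
        have h1 : pairing P c y = ∫ ω, -(An.indicator (y t) ω) ∂P :=
          integral_congr_ae (ae_of_all _ hsum)
        rw [h1, integral_neg, integral_indicator hAn0]
      rw [he] at hpair
      linarith
    have hup : ∫ ω in An, y t ω ∂P ≤ (P An).toReal * (-(1 / ((n : ℝ) + 1))) := by
      have := setIntegral_mono_on hyt.integrableOn
        (integrableOn_const (measure_lt_top P An).ne) hAn0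
        (fun ω hω => hω)
      rw [setIntegral_const] at this
      simpa [smul_eq_mul, measureReal_def] using this
    have hpos : (0 : ℝ) < 1 / ((n : ℝ) + 1) := by positivity
    have htoReal : (P An).toReal = 0 := by nlinarith [ENNReal.toReal_nonneg (a := P An)]
    rcases (ENNReal.toReal_eq_zero_iff (P An)).mp htoReal with h | h
    · exact h
    · exact absurd h (measure_ne_top P An)
  have hsub : {ω | y t ω < 0} ⊆ ⋃ n : ℕ, {ω | y t ω ≤ -(1 / ((n : ℝ) + 1))} := by
    intro ω hω
    have hω' : (0 : ℝ) < -(y t ω) := by simpa using hω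
    obtain ⟨n, hn⟩ := exists_nat_one_div_lt hω'
    exact Set.mem_iUnion.mpr ⟨n, by simp only [Set.mem_setOf_eq]; linarith⟩
  have hnull : P {ω | y t ω < 0} = 0 :=
    measure_mono_null hsub (measure_iUnion_null hAn)
  rw [ae_iff]
  convert hnull using 2
  ext ω
  simp [not_le]

end Aux

/-- in the linear unconstrained model `Sₜ(x,ω) = sₜ(ω)·x`, the polar cone
of `C¹` is the set of nonnegative `y ∈ M^∞` such that `(yₜ sₜ)` is a martingale. -/
theorem polar_CsetLin_eq_martingales
    (P : Measure Ω) [IsProbabilityMeasure P] (ℱ : Filtration (Fin (T + 1)) m0)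
    (hcomp : ∀ (t : Fin (T + 1)) (s' : Set Ω), P s' = 0 → MeasurableSet[ℱ t] s')
    (s : Fin (T + 1) → Ω → (J → ℝ)) (hs : StronglyAdapted ℱ s)
    (hsint : ∀ t, Integrable (s t) P) :
    {y ∈ Minf P ℱ | ∀ c ∈ CsetLin P ℱ s ∩ M1 P ℱ, pairing P c y ≤ 0} =
    {y | y ∈ Minf P ℱ ∧ (∀ t, ∀ᵐ ω ∂P, 0 ≤ y t ω) ∧
      (∀ t, Integrable (fun ω => y t ω • s t ω) P) ∧
      Martingale (fun t ω => y t ω • s t ω) ℱ P} := by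
  ext y
  simp only [Set.mem_setOf_eq, Set.mem_sep_iff]
  constructor
  · rintro ⟨hyInf, hpolar⟩
    obtain ⟨hyM, hybnd⟩ := hyInf
    have hint : ∀ u, Integrable (fun ω => y u ω • s u ω) P := fun u =>
      (hsint u).smul_of_top_right (hybnd u)
    exact ⟨⟨hyM, hybnd⟩, fun t => nonneg_of_polar hyM hybnd hpolar t, hint,
      mart_of_polar hs hsint hyM hybnd hpolar hint⟩
  · rintro ⟨hyInf, hpos, hint, hmart⟩
    refine ⟨hyInf, ?_⟩
    rintro c ⟨⟨hcM, x, hx, hxlast, hsh⟩, hcM1⟩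
    have hg : Integrable (fun ω => ∑ u, c u ω * y u ω) P := by
      refine integrable_finset_sum _ fun u _ => ?_
      obtain ⟨C, _, hC⟩ := exists_ae_bound_of_memtop (hyInf.2 u)
      have h1 : Integrable (fun ω => y u ω * c u ω) P :=
        (hcM1.2 u).bdd_mul ((hyInf.1 u).mono (ℱ.le u)).aestronglyMeasurable
          (by filter_upwards [hC] with ω h; rwa [Real.norm_eq_abs])
      have h2 : (fun ω => c u ω * y u ω) = fun ω => y u ω * c u ω := by
        funext ω; ring
      rw [h2]; exact h1
    have hle : ∀ᵐ ω ∂P, (∑ u, c u ω * y u ω) ≤ ∑ t : Fin T, ∑ j,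
        x t.castSucc ω j * ((fun (v : Fin (T + 1)) (ω' : Ω) => y v ω' • s v ω') t.succ ω j -
          (fun (v : Fin (T + 1)) (ω' : Ω) => y v ω' • s v ω') t.castSucc ω j) := by
      have hposs : ∀ᵐ ω ∂P, ∀ u, 0 ≤ y u ω := ae_all_iff.mpr hpos
      filter_upwards [hsh, hposs] with ω hωsh hωpos
      have step1 : ∑ u, c u ω * y u ω ≤
          ∑ u, y u ω * (-(∑ j, s u ω j * (x u ω j - prevP x u ω j))) := by
        refine Finset.sum_le_sum fun u _ => ?_
        rw [mul_comm]
        exact mul_le_mul_of_nonneg_left (by linarith [hωsh u]) (hωpos u)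
      refine le_trans step1 (le_of_eq ?_)
      have habel := pointwise_abel (fun u => y u ω) (fun u j => s u ω j)
        (fun u j => x u ω j)
        (by funext j; exact congrFun (congrFun hxlast ω) j)
      have hmatch : ∀ u : Fin (T + 1), (∑ j, s u ω j * (x u ω j - prevP x u ω j)) =
          ∑ j, s u ω j * (x u ω j - (if u.1 = 0 then 0 else
            x ⟨u.1 - 1, lt_of_le_of_lt (Nat.sub_le _ _) u.isLt⟩ ω j)) := by
        intro u
        refine Finset.sum_congr rfl fun j _ => ?_
        rw [prevP_apply]
        split <;> rfl
      rw [show (∑ u, y u ω * (-(∑ j, s u ω j * (x u ω j - prevP x u ω j)))) =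
          ∑ u, y u ω * (-(∑ j, s u ω j * (x u ω j - (if u.1 = 0 then 0 else
            x ⟨u.1 - 1, lt_of_le_of_lt (Nat.sub_le _ _) u.isLt⟩ ω j)))) from
        Finset.sum_congr rfl fun u _ => by rw [hmatch u]]
      exact habel
    exact transform_nonpos hmart x hx _ hg hle
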